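/- arXiv:2602.19733 — 4 statements merged into one kernel-verified Lean document; each statement's English description precedes it below -/
import Mathlib

section
/- Let D* = (Id − A)⁻¹ B where ‖A‖ ≤ ρ < 1 and ‖B‖ ≤ κ. Let (Aₖ), (Bₖ) be operator sequences with ‖Aₖ‖ ≤ ρ, ‖Aₖ − A‖ ≤ M_x·eₖ, ‖Bₖ − B‖ ≤ M_u·eₖ, where e_{k+1} ≤ ρ·eₖ. Define D_{k+1} := Aₖ·Dₖ + Bₖ. Then for all k ≥ 1, ‖Dₖ − D*‖ ≤ ρᵏ·‖D₀ − D*‖ + k·ρ^{k-1}·Γ·e₀, where Γ := M_x·κ/(1 − ρ) + M_u. -/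
theorem stmt_6 {X U : Type*}
    [NormedAddCommGroup X] [NormedSpace ℝ X] [CompleteSpace X]
    [NormedAddCommGroup U] [NormedSpace ℝ U]
    (A : X →L[ℝ] X) (B : U →L[ℝ] X) (ρ κ Mx Mu : ℝ)
    (hρ0 : 0 ≤ ρ) (hρ1 : ρ < 1) (hA : ‖A‖ ≤ ρ) (hB : ‖B‖ ≤ κ)
    (hMx : 0 ≤ Mx) (hMu : 0 ≤ Mu)
    (e : ℕ → ℝ) (he : ∀ k, 0 ≤ e k) (hrece : ∀ k, e (k + 1) ≤ ρ * e k)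
    (Ak : ℕ → X →L[ℝ] X) (Bk : ℕ → U →L[ℝ] X)
    (hAk : ∀ k, ‖Ak k‖ ≤ ρ)
    (hAkA : ∀ k, ‖Ak k - A‖ ≤ Mx * e k)
    (hBkB : ∀ k, ‖Bk k - B‖ ≤ Mu * e k)
    (D : ℕ → U →L[ℝ] X)
    (hD : ∀ k, D (k + 1) = (Ak k).comp (D k) + Bk k) :
    ∀ k, 1 ≤ k →
      ‖D k - (Ring.inverse (1 - A)).comp B‖ ≤
        ρ ^ k * ‖D 0 - (Ring.inverse (1 - A)).comp B‖ +
          (k : ℝ) * ρ ^ (k - 1) * (Mx * κ / (1 - ρ) + Mu) * e 0 := by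
  have hρ1' : (0:ℝ) < 1 - ρ := by linarith
  have hκ : 0 ≤ κ := le_trans (norm_nonneg B) hB
  set Ds := (Ring.inverse (1 - A)).comp B with hDs
  have hAlt : ‖A‖ < 1 := lt_of_le_of_lt hA hρ1
  have hunit : IsUnit (1 - A) := (Units.oneSub A hAlt).isUnit
  have hfix : (1 - A).comp Ds = B := by
    have h1 : (1 - A) * Ring.inverse (1 - A) = 1 := Ring.mul_inverse_cancel _ hunit
    calc (1 - A).comp ((Ring.inverse (1 - A)).comp B)
        = ((1 - A) * Ring.inverse (1 - A)).comp B := by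
          rw [ContinuousLinearMap.mul_def, ContinuousLinearMap.comp_assoc]
      _ = B := by rw [h1, ContinuousLinearMap.one_def, ContinuousLinearMap.id_comp]
  have hstar : Ds = A.comp Ds + B := by
    have h2 : Ds - A.comp Ds = B := by
      rw [← hfix, ContinuousLinearMap.sub_comp, ContinuousLinearMap.one_def,
        ContinuousLinearMap.id_comp]
    rw [← h2]; abel
  have hDsnorm : ‖Ds‖ ≤ κ / (1 - ρ) := by
    have h1 : ‖Ds‖ ≤ ρ * ‖Ds‖ + κ := by
      calc ‖Ds‖ = ‖A.comp Ds + B‖ := by rw [← hstar]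
        _ ≤ ‖A.comp Ds‖ + ‖B‖ := norm_add_le _ _
        _ ≤ ‖A‖ * ‖Ds‖ + κ := by
            gcongr; exact ContinuousLinearMap.opNorm_comp_le _ _
        _ ≤ ρ * ‖Ds‖ + κ := by gcongr
    rw [le_div_iff₀ hρ1']
    nlinarith
  obtain ⟨Γ, hΓ⟩ : ∃ g, g = Mx * κ / (1 - ρ) + Mu := ⟨_, rfl⟩
  have hΓ0 : 0 ≤ Γ := by
    rw [hΓ]
    have : 0 ≤ Mx * κ / (1 - ρ) := div_nonneg (mul_nonneg hMx hκ) hρ1'.le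
    linarith
  have hrec : ∀ k, ‖D (k + 1) - Ds‖ ≤ ρ * ‖D k - Ds‖ + Γ * e k := by
    intro k
    have key : D (k + 1) - Ds
        = (Ak k).comp (D k - Ds) + ((Ak k - A).comp Ds + (Bk k - B)) := by
      rw [hD k]
      nth_rewrite 1 [hstar]
      rw [ContinuousLinearMap.comp_sub, ContinuousLinearMap.sub_comp]
      abel
    have h1 : ‖D (k + 1) - Ds‖ ≤ ‖(Ak k).comp (D k - Ds)‖
        + (‖(Ak k - A).comp Ds‖ + ‖Bk k - B‖) := by
      rw [key]
      exact le_trans (norm_add_le _ _) (by gcongr; exact norm_add_le _ _)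
    have h2 : ‖(Ak k).comp (D k - Ds)‖ ≤ ρ * ‖D k - Ds‖ :=
      le_trans (ContinuousLinearMap.opNorm_comp_le _ _)
        (by gcongr; exact hAk k)
    have h3 : ‖(Ak k - A).comp Ds‖ ≤ (Mx * e k) * (κ / (1 - ρ)) :=
      le_trans (ContinuousLinearMap.opNorm_comp_le _ _)
        (mul_le_mul (hAkA k) hDsnorm (norm_nonneg _)
          (mul_nonneg hMx (he k)))
    have h4 : ‖Bk k - B‖ ≤ Mu * e k := hBkB k
    have : (Mx * e k) * (κ / (1 - ρ)) + Mu * e k = Γ * e k := by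
      rw [hΓ]; ring
    linarith
  have heρ : ∀ k, e k ≤ ρ ^ k * e 0 := by
    intro k
    induction k with
    | zero => simp
    | succ n ih =>
      calc e (n + 1) ≤ ρ * e n := hrece n
        _ ≤ ρ * (ρ ^ n * e 0) := by gcongr
        _ = ρ ^ (n + 1) * e 0 := by ring
  intro k hk
  rw [← hΓ]
  induction k, hk using Nat.le_induction with
  | base =>
    have := hrec 0
    simp only [pow_one, Nat.cast_one, pow_zero]
    have he0 : 0 ≤ e 0 := he 0
    calc ‖D 1 - Ds‖ ≤ ρ * ‖D 0 - Ds‖ + Γ * e 0 := hrec 0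
      _ = ρ * ‖D 0 - Ds‖ + 1 * 1 * Γ * e 0 := by ring
      _ ≤ _ := le_refl _
  | succ n hn ih =>
    have hn1 : n - 1 + 1 = n := Nat.succ_pred_eq_of_pos hn
    have hpow : ρ * ρ ^ (n - 1) = ρ ^ n := by
      rw [← pow_succ', hn1]
    have hΓe : 0 ≤ Γ * e 0 := mul_nonneg hΓ0 (he 0)
    have hρn : 0 ≤ ρ ^ n := pow_nonneg hρ0 n
    have hcast : ((n : ℝ) + 1) = ((n + 1 : ℕ) : ℝ) := by push_cast; ring
    calc ‖D (n + 1) - Ds‖ ≤ ρ * ‖D n - Ds‖ + Γ * e n := hrec n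
      _ ≤ ρ * (ρ ^ n * ‖D 0 - Ds‖ + (n : ℝ) * ρ ^ (n - 1) * Γ * e 0)
          + Γ * (ρ ^ n * e 0) := by
            gcongr
            · exact heρ n
      _ = ρ ^ (n + 1) * ‖D 0 - Ds‖
          + ((n : ℝ) * (ρ * ρ ^ (n - 1)) * Γ * e 0 + ρ ^ n * (Γ * e 0)) := by ring
      _ = ρ ^ (n + 1) * ‖D 0 - Ds‖
          + ((n : ℝ) + 1) * ρ ^ n * Γ * e 0 := by rw [hpow]; ring
      _ = ρ ^ (n + 1) * ‖D 0 - Ds‖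
          + ((n + 1 : ℕ) : ℝ) * ρ ^ ((n + 1) - 1) * Γ * e 0 := by
            rw [hcast]; norm_num
end

section
/- (Truncation/late-start bound) Under the same abstract setting, fix a truncation index T ∈ ℕ and define the late-started sequence by D₀^T := D₀ and D_{k+1}^T := A_{k+T}·Dₖ^T + B_{k+T}. Then for all k ≥ 1, ‖Dₖ^T − D*‖ ≤ ρᵏ·‖D₀ − D*‖ + k·ρ^{k+T−1}·Γ·e₀. -/
theorem stmt_8 {X U : Type*}
    [NormedAddCommGroup X] [NormedSpace ℝ X] [CompleteSpace X]
    [NormedAddCommGroup U] [NormedSpace ℝ U]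
    (A : X →L[ℝ] X) (B : U →L[ℝ] X) (ρ κ Mx Mu : ℝ)
    (hρ0 : 0 ≤ ρ) (hρ1 : ρ < 1) (hA : ‖A‖ ≤ ρ) (hB : ‖B‖ ≤ κ)
    (hMx : 0 ≤ Mx) (hMu : 0 ≤ Mu)
    (e : ℕ → ℝ) (he : ∀ k, 0 ≤ e k) (hrece : ∀ k, e (k + 1) ≤ ρ * e k)
    (Ak : ℕ → X →L[ℝ] X) (Bk : ℕ → U →L[ℝ] X)
    (hAk : ∀ k, ‖Ak k‖ ≤ ρ)
    (hAkA : ∀ k, ‖Ak k - A‖ ≤ Mx * e k)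
    (hBkB : ∀ k, ‖Bk k - B‖ ≤ Mu * e k)
    (T : ℕ) (D0 : U →L[ℝ] X) (DT : ℕ → U →L[ℝ] X)
    (hDT0 : DT 0 = D0)
    (hDT : ∀ k, DT (k + 1) = (Ak (k + T)).comp (DT k) + Bk (k + T)) :
    ∀ k, 1 ≤ k →
      ‖DT k - (Ring.inverse (1 - A)).comp B‖ ≤
        ρ ^ k * ‖D0 - (Ring.inverse (1 - A)).comp B‖ +
          (k : ℝ) * ρ ^ (k + T - 1) * (Mx * κ / (1 - ρ) + Mu) * e 0 := by
  have hρ' : (0:ℝ) < 1 - ρ := by linarith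
  have hκ : 0 ≤ κ := le_trans (norm_nonneg B) hB
  set Γ : ℝ := Mx * κ / (1 - ρ) + Mu with hΓdef
  have hΓ : 0 ≤ Γ := by positivity
  set Ds : U →L[ℝ] X := (Ring.inverse (1 - A)).comp B with hDs
  -- fixed point equation
  have hunit : IsUnit ((1:X →L[ℝ] X) - A) :=
    (Units.oneSub A (lt_of_le_of_lt hA hρ1)).isUnit
  have hmul : ((1:X →L[ℝ] X) - A) * Ring.inverse (1 - A) = 1 :=
    Ring.mul_inverse_cancel _ hunit
  have hfix : Ds = A.comp Ds + B := by
    have h1 : ((1:X →L[ℝ] X) - A).comp ((Ring.inverse (1 - A)).comp B) = B := by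
      rw [← ContinuousLinearMap.comp_assoc]
      change (((1:X →L[ℝ] X) - A) * Ring.inverse (1 - A)).comp B = B
      rw [hmul, ContinuousLinearMap.one_def, ContinuousLinearMap.id_comp]
    rw [ContinuousLinearMap.sub_comp, ContinuousLinearMap.one_def,
      ContinuousLinearMap.id_comp] at h1
    exact sub_eq_iff_eq_add'.mp h1
  -- norm bound on Ds
  have hDsnorm : ‖Ds‖ ≤ κ / (1 - ρ) := by
    have h1 : ‖Ds‖ ≤ ρ * ‖Ds‖ + κ := by
      calc ‖Ds‖ = ‖A.comp Ds + B‖ := by rw [← hfix]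
        _ ≤ ‖A.comp Ds‖ + ‖B‖ := norm_add_le _ _
        _ ≤ ‖A‖ * ‖Ds‖ + κ := by
            gcongr
            exact ContinuousLinearMap.opNorm_comp_le _ _
        _ ≤ ρ * ‖Ds‖ + κ := by gcongr
    rw [le_div_iff₀ hρ']
    nlinarith [norm_nonneg Ds]
  -- geometric decay of e
  have hegeo : ∀ n, e n ≤ ρ ^ n * e 0 := by
    intro n
    induction n with
    | zero => simp
    | succ n ih =>
      calc e (n + 1) ≤ ρ * e n := hrece n
        _ ≤ ρ * (ρ ^ n * e 0) := by gcongr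
        _ = ρ ^ (n + 1) * e 0 := by ring
  -- one-step recursion bound
  have hstep : ∀ k, ‖DT (k + 1) - Ds‖ ≤ ρ * ‖DT k - Ds‖ + Γ * e (k + T) := by
    intro k
    have key : DT (k + 1) - Ds =
        (Ak (k + T)).comp (DT k - Ds) +
          ((Ak (k + T) - A).comp Ds + (Bk (k + T) - B)) := by
      rw [hDT k, ContinuousLinearMap.comp_sub, ContinuousLinearMap.sub_comp]
      nth_rewrite 1 [hfix]
      abel
    have hcomp1 : ‖(Ak (k + T)).comp (DT k - Ds)‖ ≤ ρ * ‖DT k - Ds‖ := by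
      calc ‖(Ak (k + T)).comp (DT k - Ds)‖ ≤ ‖Ak (k + T)‖ * ‖DT k - Ds‖ :=
            ContinuousLinearMap.opNorm_comp_le _ _
        _ ≤ ρ * ‖DT k - Ds‖ := by gcongr ?_ * _; exact hAk _
    have hcomp2 : ‖(Ak (k + T) - A).comp Ds‖ ≤ Mx * e (k + T) * (κ / (1 - ρ)) := by
      calc ‖(Ak (k + T) - A).comp Ds‖ ≤ ‖Ak (k + T) - A‖ * ‖Ds‖ :=
            ContinuousLinearMap.opNorm_comp_le _ _
        _ ≤ Mx * e (k + T) * (κ / (1 - ρ)) := by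
            exact mul_le_mul (hAkA _) hDsnorm (norm_nonneg _)
              (mul_nonneg hMx (he _))
    have hB2 : ‖Bk (k + T) - B‖ ≤ Mu * e (k + T) := hBkB _
    calc ‖DT (k + 1) - Ds‖
        ≤ ‖(Ak (k + T)).comp (DT k - Ds)‖ +
            (‖(Ak (k + T) - A).comp Ds‖ + ‖Bk (k + T) - B‖) := by
          rw [key]; exact le_trans (norm_add_le _ _) (by gcongr; exact norm_add_le _ _)
      _ ≤ ρ * ‖DT k - Ds‖ + (Mx * e (k + T) * (κ / (1 - ρ)) + Mu * e (k + T)) := by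
          gcongr
      _ = ρ * ‖DT k - Ds‖ + Γ * e (k + T) := by rw [hΓdef]; ring
  -- main induction
  intro k hk
  induction k, hk using Nat.le_induction with
  | base =>
    have h1 : ‖DT 1 - Ds‖ ≤ ρ * ‖DT 0 - Ds‖ + Γ * e (0 + T) := hstep 0
    have h2 : e (0 + T) ≤ ρ ^ T * e 0 := by simpa using hegeo T
    have h3 : (1:ℕ) + T - 1 = T := by omega
    rw [hDT0] at h1
    rw [h3]
    calc ‖DT 1 - Ds‖ ≤ ρ * ‖D0 - Ds‖ + Γ * e (0 + T) := h1
      _ ≤ ρ * ‖D0 - Ds‖ + Γ * (ρ ^ T * e 0) := by gcongr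
      _ = ρ ^ 1 * ‖D0 - Ds‖ + ((1:ℕ):ℝ) * ρ ^ T * Γ * e 0 := by push_cast; ring
  | succ k hk1 ih =>
    have h1 : ‖DT (k + 1) - Ds‖ ≤ ρ * ‖DT k - Ds‖ + Γ * e (k + T) := hstep k
    have h2 : e (k + T) ≤ ρ ^ (k + T) * e 0 := hegeo (k + T)
    have hexp : k + T - 1 + 1 = k + T := by omega
    have hexp2 : k + 1 + T - 1 = k + T := by omega
    rw [hexp2]
    calc ‖DT (k + 1) - Ds‖
        ≤ ρ * ‖DT k - Ds‖ + Γ * e (k + T) := h1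
      _ ≤ ρ * (ρ ^ k * ‖D0 - Ds‖ + (k : ℝ) * ρ ^ (k + T - 1) * Γ * e 0) +
            Γ * (ρ ^ (k + T) * e 0) := by gcongr
      _ = ρ ^ (k + 1) * ‖D0 - Ds‖ +
            ((k : ℝ) * (ρ * ρ ^ (k + T - 1)) * Γ * e 0 + ρ ^ (k + T) * Γ * e 0) := by
          ring
      _ = ρ ^ (k + 1) * ‖D0 - Ds‖ + (((k:ℕ) + 1 : ℕ):ℝ) * ρ ^ (k + T) * Γ * e 0 := by
          rw [← pow_succ', hexp]; push_cast; ring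
end

section
/- Let ρ ∈ (0,1), K ∈ ℕ, ω > 0, and constants d₀ ≥ 0, C ≥ 0. Define h : [0,K] → ℝ by h(T) = ρ^{K−T}·d₀ + (K − T)·ρ^{K+ωT−1}·C. Then h is convex on [0,K]. -/
theorem stmt_9 (ρ : ℝ) (h0 : 0 < ρ) (h1 : ρ < 1)
    (K : ℝ) (hK : 0 ≤ K) (ω : ℝ) (hω : 0 < ω)
    (d0 C : ℝ) (hd0 : 0 ≤ d0) (hC : 0 ≤ C) :
    ConvexOn ℝ (Set.Icc 0 K)
      (fun T : ℝ => ρ ^ (K - T) * d0 + (K - T) * ρ ^ (K + ω * T - 1) * C) := by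
  set L := Real.log ρ with hL
  have hlog : L < 0 := Real.log_neg h0 h1
  have hfun : (fun T : ℝ => ρ ^ (K - T) * d0 + (K - T) * ρ ^ (K + ω * T - 1) * C)
      = (fun T : ℝ => d0 * Real.exp (L * (K - T))
        + C * ((K - T) * Real.exp (L * (K + ω * T - 1)))) := by
    funext T
    rw [Real.rpow_def_of_pos h0, Real.rpow_def_of_pos h0]
    ring
  rw [hfun]
  have h1a : ∀ T : ℝ, HasDerivAt (fun x : ℝ => L * (K - x)) (-L) T := by
    intro T
    have := ((hasDerivAt_id T).const_sub K).const_mul L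
    simpa using this
  have h1b : ∀ T : ℝ, HasDerivAt (fun x : ℝ => L * (K + ω * x - 1)) (L * ω) T := by
    intro T
    have h : HasDerivAt (fun x : ℝ => K + ω * x - 1) ω T := by
      simpa using (((hasDerivAt_id T).const_mul ω).const_add K).sub_const 1
    simpa using h.const_mul L
  set f' : ℝ → ℝ := fun T => -L * d0 * Real.exp (L * (K - T))
      + C * ((L * ω * (K - T) - 1) * Real.exp (L * (K + ω * T - 1))) with hf'def
  set f'' : ℝ → ℝ := fun T => L ^ 2 * d0 * Real.exp (L * (K - T))
      + C * (((L * ω) ^ 2 * (K - T) - 2 * (L * ω)) * Real.exp (L * (K + ω * T - 1))) with hf''def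
  have hd1 : ∀ T : ℝ, HasDerivAt (fun T : ℝ => d0 * Real.exp (L * (K - T))
      + C * ((K - T) * Real.exp (L * (K + ω * T - 1)))) (f' T) T := by
    intro T
    have e1 := (h1a T).exp
    have e2 := (h1b T).exp
    have t1 := e1.const_mul d0
    have t2 := (((hasDerivAt_id T).const_sub K).mul e2).const_mul C
    have := t1.add t2
    refine this.congr_deriv ?_
    simp only [hf'def, id_eq]
    ring
  have hd2 : ∀ T : ℝ, HasDerivAt f' (f'' T) T := by
    intro T
    have e1 := (h1a T).exp
    have e2 := (h1b T).exp
    have inner : HasDerivAt (fun x : ℝ => L * ω * (K - x) - 1) (L * ω * (-1)) T := by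
      simpa using (((hasDerivAt_id T).const_sub K).const_mul (L * ω)).sub_const 1
    have t1 := e1.const_mul (-L * d0)
    have t2 := (inner.mul e2).const_mul C
    have := t1.add t2
    refine this.congr_deriv ?_
    simp only [hf''def, id_eq]
    ring
  apply convexOn_of_hasDerivWithinAt2_nonneg (f' := f') (f'' := f'') (convex_Icc 0 K)
  · exact fun T _ => ((hd1 T).continuousAt).continuousWithinAt
  · exact fun T _ => (hd1 T).hasDerivWithinAt
  · exact fun T _ => (hd2 T).hasDerivWithinAt
  · intro T hT
    rw [interior_Icc] at hT
    have hKT : 0 ≤ K - T := le_of_lt (sub_pos.mpr hT.2)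
    have h2 : 0 ≤ (L * ω) ^ 2 * (K - T) - 2 * (L * ω) := by
      have hm : L * ω < 0 := mul_neg_of_neg_of_pos hlog hω
      nlinarith
    simp only [hf''def, id_eq]
    positivity
end

section
/- (Heavy-ball spectral condition) Consider the heavy-ball iteration matrix on X × X given in block form by M = [[(1+β)I − αH, −βI],[I, 0]] where H is symmetric with eigenvalues in [m,L], 0 < m ≤ L, β ∈ [0,1), and α > 0 with α·L < 2(1+β). Then every eigenvalue λ of M satisfies |λ| < 1, i.e., the spectral radius of M is strictly less than 1, even though the operator norm of M may exceed 1. -/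
set_option maxHeartbeats 1000000


open Matrix

theorem stmt_16 {N : ℕ} (H : Matrix (Fin N) (Fin N) ℝ)
    (hsymm : H.IsSymm) (m L : ℝ) (hm : 0 < m) (hmL : m ≤ L)
    (eN : EuclideanSpace ℝ (Fin N) ≃L[ℝ] (Fin N → ℝ)) (heN : eN = EuclideanSpace.equiv (Fin N) ℝ)
    (hspec : ∀ v : EuclideanSpace ℝ (Fin N),
      m * ‖v‖ ^ 2 ≤ inner ℝ (eN.symm (H.mulVec (eN v))) v ∧
        (inner ℝ (eN.symm (H.mulVec (eN v))) v : ℝ) ≤ L * ‖v‖ ^ 2)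
    (β : ℝ) (hβ0 : 0 ≤ β) (hβ1 : β < 1)
    (α : ℝ) (hα0 : 0 < α) (hαL : α * L < 2 * (1 + β))
    (M : Matrix (Fin N ⊕ Fin N) (Fin N ⊕ Fin N) ℝ)
    (hM : M = Matrix.fromBlocks ((1 + β) • 1 - α • H) (-(β • 1)) 1 0) :
    ∀ lam ∈ spectrum ℂ (M.map (algebraMap ℝ ℂ)), ‖lam‖ < 1 := by
  subst heN
  -- step 0: quadratic form bounds as sums
  have hquad : ∀ f : Fin N → ℝ, m * (∑ i, f i ^ 2) ≤ ∑ i, (∑ j, H i j * f j) * f i ∧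
      (∑ i, (∑ j, H i j * f j) * f i) ≤ L * (∑ i, f i ^ 2) := by
    intro f
    obtain ⟨h1, h2⟩ := hspec ((EuclideanSpace.equiv (Fin N) ℝ).symm f)
    have hnorm : ‖(EuclideanSpace.equiv (Fin N) ℝ).symm f‖ ^ 2 = ∑ i, f i ^ 2 := by
      rw [EuclideanSpace.norm_eq, Real.sq_sqrt (by positivity)]
      simp [PiLp.continuousLinearEquiv, Real.norm_eq_abs, sq_abs]
      rfl
    have hin : (inner ℝ ((EuclideanSpace.equiv (Fin N) ℝ).symm
          (H.mulVec ((EuclideanSpace.equiv (Fin N) ℝ) ((EuclideanSpace.equiv (Fin N) ℝ).symm f))))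
          ((EuclideanSpace.equiv (Fin N) ℝ).symm f) : ℝ) = ∑ i, (∑ j, H i j * f j) * f i := by
      simp [PiLp.inner_apply, Matrix.mulVec, dotProduct, PiLp.continuousLinearEquiv]
      exact Finset.sum_congr rfl fun i _ => by rw [mul_comm]; rfl
    rw [hnorm, hin] at h1 h2
    exact ⟨h1, h2⟩
  intro lam hlam
  -- step 1: eigenvector
  rw [← AlgEquiv.spectrum_eq (Matrix.toLinAlgEquiv' (n := Fin N ⊕ Fin N) (R := ℂ)),
    ← Module.End.hasEigenvalue_iff_mem_spectrum] at hlam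
  obtain ⟨w, hwmem, hw0⟩ := hlam.exists_hasEigenvector
  rw [Module.End.mem_eigenspace_iff, Matrix.toLinAlgEquiv'_apply] at hwmem
  have hw : (M.map (algebraMap ℝ ℂ)) *ᵥ w = lam • w := hwmem
  -- step 2: block equations
  have hrow2 : ∀ i, w (Sum.inl i) = lam * w (Sum.inr i) := by
    intro i
    have h := congrFun hw (Sum.inr i)
    simp [hM, Matrix.mulVec, dotProduct, Fintype.sum_sum_type, Matrix.one_apply,
      Matrix.map_apply, apply_ite, Finset.mul_sum] at h
    exact h
  have hrow1 : ∀ i, (1+(β:ℂ)) * w (Sum.inl i) - α * (∑ j, (H i j : ℂ) * w (Sum.inl j))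
      - β * w (Sum.inr i) = lam * w (Sum.inl i) := by
    intro i
    have h := congrFun hw (Sum.inl i)
    simp [hM, Matrix.mulVec, dotProduct, Fintype.sum_sum_type, Matrix.one_apply,
      Matrix.map_apply, apply_ite, sub_mul, Finset.sum_sub_distrib, Finset.mul_sum] at h
    simp_rw [Finset.mul_sum, ← mul_assoc]
    linear_combination h
  set v : Fin N → ℂ := fun i => w (Sum.inr i) with hv
  -- case lam = 0
  rcases eq_or_ne lam 0 with rfl | hlam0
  · simp
  -- lam ≠ 0
  have hγ : (α : ℂ) * lam ≠ 0 := mul_ne_zero (by exact_mod_cast hα0.ne') hlam0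
  -- the H-eigenvalue relation
  set μ : ℂ := ((1+(β:ℂ))*lam - β - lam^2) / ((α:ℂ) * lam) with hμ
  have hSv : ∀ i, (∑ j, (H i j : ℂ) * v j) = μ * v i := by
    intro i
    have h1 := hrow1 i
    simp_rw [hrow2] at h1
    have hsum : (∑ j, (H i j : ℂ) * (lam * v j)) = lam * ∑ j, (H i j : ℂ) * v j := by
      rw [Finset.mul_sum]; exact Finset.sum_congr rfl fun j _ => by ring
    rw [hsum] at h1
    simp only [show ∀ j, w (Sum.inr j) = v j from fun _ => rfl] at h1
    rw [hμ, div_mul_eq_mul_div, eq_comm, div_eq_iff hγ]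
    linear_combination h1
  -- v ≠ 0
  have hvne : v ≠ 0 := by
    intro h0
    apply hw0
    funext s
    cases s with
    | inl i =>
        rw [hrow2 i, show w (Sum.inr i) = 0 from congrFun h0 i, mul_zero]; rfl
    | inr i => exact congrFun h0 i
  -- real and imaginary parts
  set a : Fin N → ℝ := fun i => (v i).re with ha
  set b : Fin N → ℝ := fun i => (v i).im with hb
  have hP : ∀ i, (∑ j, H i j * a j) = μ.re * a i - μ.im * b i := by
    intro i
    have := congrArg Complex.re (hSv i)
    simpa [Complex.mul_re, ha, hb] using this
  have hQ : ∀ i, (∑ j, H i j * b j) = μ.re * b i + μ.im * a i := by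
    intro i
    have := congrArg Complex.im (hSv i)
    simpa [Complex.mul_im, ha, hb] using this
  -- symmetry
  have hsym' : ∑ i, (∑ j, H i j * a j) * b i = ∑ i, (∑ j, H i j * b j) * a i := by
    calc ∑ i, (∑ j, H i j * a j) * b i = ∑ i, ∑ j, H i j * a j * b i := by
          simp_rw [Finset.sum_mul]
      _ = ∑ j, ∑ i, H i j * a j * b i := Finset.sum_comm
      _ = ∑ j, ∑ i, H j i * b i * a j := by
          refine Finset.sum_congr rfl fun j _ => Finset.sum_congr rfl fun i _ => ?_
          rw [← hsymm.apply i j]; ring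
      _ = ∑ j, (∑ i, H j i * b i) * a j := by simp_rw [Finset.sum_mul]
  set T : ℝ := ∑ i, (a i ^ 2 + b i ^ 2) with hT
  have hTpos : 0 < T := by
    obtain ⟨i0, hi0⟩ : ∃ i, v i ≠ 0 := by
      by_contra hc
      push_neg at hc
      exact hvne (funext hc)
    have h1 : 0 < a i0 ^ 2 + b i0 ^ 2 := by
      rcases Complex.ext_iff.not.mp hi0 with h
      have : a i0 ≠ 0 ∨ b i0 ≠ 0 := by
        by_contra hc
        push_neg at hc
        exact hi0 (Complex.ext (by simpa [ha] using hc.1) (by simpa [hb] using hc.2))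
      rcases this with h | h
      · positivity
      · positivity
    refine Finset.sum_pos' (fun i _ => by positivity) ⟨i0, Finset.mem_univ i0, h1⟩
  -- μ is real
  have hμim : μ.im = 0 := by
    have key : μ.im * T = 0 := by
      have h0 : ∀ i, (∑ j, H i j * b j) * a i - (∑ j, H i j * a j) * b i
          = μ.im * (a i ^ 2 + b i ^ 2) := by
        intro i
        rw [hP i, hQ i]; ring
      have : μ.im * T = ∑ i, ((∑ j, H i j * b j) * a i - (∑ j, H i j * a j) * b i) := by
        rw [hT, Finset.mul_sum]
        exact Finset.sum_congr rfl fun i _ => (h0 i).symm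
      rw [this, Finset.sum_sub_distrib, hsym', sub_self]
    rcases mul_eq_zero.mp key with h | h
    · exact h
    · exact absurd h hTpos.ne'
  -- m ≤ μ.re ≤ L
  have hm_le : m ≤ μ.re ∧ μ.re ≤ L := by
    obtain ⟨ha1, ha2⟩ := hquad a
    obtain ⟨hb1, hb2⟩ := hquad b
    have hPa : ∑ i, (∑ j, H i j * a j) * a i = μ.re * ∑ i, a i ^ 2 := by
      rw [Finset.mul_sum]
      exact Finset.sum_congr rfl fun i _ => by rw [hP i, hμim]; ring
    have hQb : ∑ i, (∑ j, H i j * b j) * b i = μ.re * ∑ i, b i ^ 2 := by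
      rw [Finset.mul_sum]
      exact Finset.sum_congr rfl fun i _ => by rw [hQ i, hμim]; ring
    rw [hPa] at ha1 ha2
    rw [hQb] at hb1 hb2
    have hTsplit : T = (∑ i, a i ^ 2) + (∑ i, b i ^ 2) := by
      rw [hT, Finset.sum_add_distrib]
    constructor
    · have h : m * T ≤ μ.re * T := by rw [hTsplit, mul_add, mul_add]; linarith
      exact le_of_mul_le_mul_right h hTpos
    · have h : μ.re * T ≤ L * T := by rw [hTsplit, mul_add, mul_add]; linarith
      exact le_of_mul_le_mul_right h hTpos
  obtain ⟨hmμ, hμL⟩ := hm_le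
  -- the quadratic equation over ℂ with real coefficients
  set c : ℝ := 1 + β - α * μ.re with hc
  have hc1 : c < 1 + β := by
    have : 0 < α * μ.re := mul_pos hα0 (lt_of_lt_of_le hm hmμ)
    rw [hc]; linarith
  have hc2 : -(1 + β) < c := by
    have : α * μ.re ≤ α * L := mul_le_mul_of_nonneg_left hμL hα0.le
    rw [hc]; linarith
  have hμreal : (μ.re : ℂ) = μ := Complex.ext (by simp) (by simp [hμim])
  have hquadC : lam ^ 2 - (c : ℂ) * lam + (β : ℂ) = 0 := by
    have hK : (1+(β:ℂ))*lam - β - lam^2 = μ * ((α:ℂ) * lam) := by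
      rw [hμ, div_mul_cancel₀ _ hγ]
    rw [← hμreal] at hK
    push_cast [hc]
    linear_combination -hK
  set x : ℝ := lam.re with hx
  set y : ℝ := lam.im with hyy
  have hre : x ^ 2 - y ^ 2 - c * x + β = 0 := by
    have := congrArg Complex.re hquadC
    simpa [pow_two, Complex.mul_re, Complex.mul_im, hx, hyy] using this
  have him : 2 * x * y - c * y = 0 := by
    have := congrArg Complex.im hquadC
    simp [pow_two, Complex.mul_re, Complex.mul_im, hx, hyy] at this
    linarith
  -- conclude x^2 + y^2 < 1
  have hfinal : x ^ 2 + y ^ 2 < 1 := by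
    rcases eq_or_ne y 0 with hy | hy
    · rw [hy] at hre ⊢
      simp only [ne_eq, OfNat.ofNat_ne_zero, not_false_eq_true, zero_pow, sub_zero, add_zero] at hre ⊢
      by_contra hcon
      push_neg at hcon
      have habs : 1 ≤ |x| := by nlinarith [sq_abs x, abs_nonneg x]
      rcases le_abs'.mp habs with hx1 | hx1
      · -- x ≤ -1
        nlinarith [mul_nonneg (by linarith : (0:ℝ) ≤ -x - 1) (by linarith : (0:ℝ) ≤ -x - β),
          mul_lt_mul_of_pos_right hc2 (by linarith : (0:ℝ) < -x)]
      · -- 1 ≤ x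
        nlinarith [mul_nonneg (by linarith : (0:ℝ) ≤ x - 1) (by linarith : (0:ℝ) ≤ x - β),
          mul_lt_mul_of_pos_right hc1 (by linarith : (0:ℝ) < x)]
    · have hcx : c = 2 * x := by
        have := mul_eq_zero.mp (show y * (2 * x - c) = 0 by linarith [him])
        rcases this with h | h
        · exact absurd h hy
        · linarith
      have : x ^ 2 + y ^ 2 = β := by rw [hcx] at hre; nlinarith
      linarith
  have habs : ‖lam‖ = Real.sqrt (x ^ 2 + y ^ 2) := by
    rw [Complex.norm_def, Complex.normSq_apply, hx, hyy]; ring_nf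
  rw [habs]
  nlinarith [Real.sq_sqrt (by positivity : (0:ℝ) ≤ x ^ 2 + y ^ 2),
    Real.sqrt_nonneg (x ^ 2 + y ^ 2)]
end
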